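/- Fix a set U ⊆ [n] and an integer k ≥ 1, and suppose l is (M,m)-(restricted smooth, restricted strongly concave) on the sparse subdomain Ω_{|U|+k}, with 0 < m ≤ M. Then for all sets L ⊆ U and S ⊆ [n] with L ∩ S = ∅ and |S| ≤ k (with the relevant maximizers assumed to exist), it holds that Σ_{j∈S} (f(L ∪ {j}) − f(L)) ≥ (m/M) · (f(L ∪ S) − f(L)); that is, the submodularity ratio γ_{U,k} of f is at least m/M. -/

import Mathlib

open scoped BigOperators

noncomputable section

abbrev Euc (n : ℕ) := EuclideanSpace ℝ (Fin n)

/-- Number of nonzero coordinates (the ℓ₀ "norm"). -/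
def norm0 {n : ℕ} (x : Euc n) : ℕ := (Finset.univ.filter fun i => x i ≠ 0).card

/-- `l` is (M,m)-(restricted smooth, restricted strongly concave) on the sparse
subdomain `Ω_r`, with gradient `g`. -/
def IsRSCSM {n : ℕ} (l : Euc n → ℝ) (g : Euc n → Euc n) (M m : ℝ) (r : ℕ) : Prop :=
  ∀ x y : Euc n, norm0 x ≤ r → norm0 y ≤ r → norm0 (x - y) ≤ r →
    (l y - l x - (inner ℝ (g x) (y - x) : ℝ) ≤ -(m / 2) * ‖y - x‖ ^ 2) ∧
    (-(M / 2) * ‖y - x‖ ^ 2 ≤ l y - l x - (inner ℝ (g x) (y - x) : ℝ))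

/-- `x` is supported in the index set `S`. -/
def SuppIn {n : ℕ} (S : Finset (Fin n)) (x : Euc n) : Prop := ∀ i, i ∉ S → x i = 0

/-- The support selection function `f(S) = l(β^(S)) - l(0)`. -/
def fsel {n : ℕ} (l : Euc n → ℝ) (B : Finset (Fin n) → Euc n) (S : Finset (Fin n)) : ℝ :=
  l (B S) - l 0

lemma norm0_le_of_suppIn {n : ℕ} {S : Finset (Fin n)} {x : Euc n} (h : SuppIn S x) :
    norm0 x ≤ S.card := by
  apply Finset.card_le_card
  intro i hi
  simp only [Finset.mem_filter] at hi
  by_contra hiS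
  exact hi.2 (h i hiS)

lemma hasDerivAt_line {n : ℕ} (l : Euc n → ℝ) (G x v : Euc n) (h : HasGradientAt l G x) :
    HasDerivAt (fun t : ℝ => l (x + t • v)) (inner ℝ G v : ℝ) 0 := by
  have h1 : HasDerivAt (fun t : ℝ => x + t • v) v 0 := by
    simpa using ((hasDerivAt_id (0 : ℝ)).smul_const v).const_add x
  have h2 := h.hasFDerivAt
  have h2x : HasFDerivAt l ((InnerProductSpace.toDual ℝ (Euc n)) G) (x + (0:ℝ) • v) := by
    simpa using h2
  have h3 := h2x.comp_hasDerivAt 0 h1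
  simp only [InnerProductSpace.toDual_apply_apply] at h3
  exact h3

theorem stmt3 {n k : ℕ} (hk : 1 ≤ k) (U : Finset (Fin n))
    (l : Euc n → ℝ) (g : Euc n → Euc n) (M m : ℝ)
    (hm : 0 < m) (hmM : m ≤ M)
    (hgrad : ∀ x, HasGradientAt l (g x) x)
    (hl : IsRSCSM l g M m (U.card + k))
    (B : Finset (Fin n) → Euc n)
    (hB0 : B ∅ = 0)
    (hBsupp : ∀ S, SuppIn S (B S))
    (hBmax : ∀ S x, SuppIn S x → l x ≤ l (B S))
    (L S : Finset (Fin n)) (hLU : L ⊆ U) (hLS : L ∩ S = ∅) (hS : S.card ≤ k) :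
    ∑ j ∈ S, (fsel l B (L ∪ {j}) - fsel l B L)
      ≥ (m / M) * (fsel l B (L ∪ S) - fsel l B L) := by
  have hM : (0:ℝ) < M := lt_of_lt_of_le hm hmM
  set x := B L with hx
  -- norm0 bound for x
  have hxsupp : SuppIn L x := hBsupp L
  have hxcard : norm0 x ≤ U.card + k :=
    le_trans (norm0_le_of_suppIn hxsupp) (le_trans (Finset.card_le_card hLU) (Nat.le_add_right _ _))
  -- stationarity: gradient vanishes on L
  have hstat : ∀ i ∈ L, g x i = 0 := by
    intro i hi
    have hmono : ∀ t : ℝ, l (x + t • EuclideanSpace.single i (1:ℝ)) ≤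
        l (x + (0:ℝ) • EuclideanSpace.single i (1:ℝ)) := by
      intro t
      have hsupp : SuppIn L (x + t • EuclideanSpace.single i (1:ℝ)) := by
        intro j hj
        have hji : j ≠ i := fun h => hj (h ▸ hi)
        have := hxsupp j hj
        simp [PiLp.add_apply, PiLp.smul_apply, EuclideanSpace.single_apply, this, hji]
      have := hBmax L _ hsupp
      simpa using this
    have hd := hasDerivAt_line l (g x) x (EuclideanSpace.single i (1:ℝ)) (hgrad x)
    have h0 := IsLocalMax.hasDerivAt_eq_zero (Filter.Eventually.of_forall hmono) hd
    simpa [EuclideanSpace.inner_single_right] using h0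
  -- per-element lower bound
  have key1 : ∀ j ∈ S, (g x j)^2 / (2*M) ≤ fsel l B (L ∪ {j}) - fsel l B L := by
    intro j _
    set a : ℝ := g x j / M with ha
    set y : Euc n := x + a • EuclideanSpace.single j (1:ℝ) with hy
    have hysupp : SuppIn (L ∪ {j}) y := by
      intro i hi
      simp only [Finset.mem_union, Finset.mem_singleton, not_or] at hi
      have := hxsupp i hi.1
      simp [hy, PiLp.add_apply, PiLp.smul_apply, EuclideanSpace.single_apply, this, hi.2]
    have hycard : norm0 y ≤ U.card + k := by
      refine le_trans (norm0_le_of_suppIn hysupp) ?_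
      have : (L ∪ {j}).card ≤ L.card + 1 := le_trans (Finset.card_union_le _ _) (by simp)
      calc (L ∪ {j}).card ≤ L.card + 1 := this
        _ ≤ U.card + k := add_le_add (Finset.card_le_card hLU) hk
    have hdsupp : SuppIn {j} (x - y) := by
      intro i hi
      simp only [Finset.mem_singleton] at hi
      simp [hy, PiLp.sub_apply, PiLp.add_apply, PiLp.smul_apply, EuclideanSpace.single_apply, hi]
    have hdcard : norm0 (x - y) ≤ U.card + k :=
      le_trans (norm0_le_of_suppIn hdsupp) (by simpa using le_trans hk (Nat.le_add_left _ _))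
    have hineq := (hl x y hxcard hycard hdcard).2
    have hyx : y - x = a • EuclideanSpace.single j (1:ℝ) := by simp [hy]
    have hinner : (inner ℝ (g x) (y - x) : ℝ) = a * g x j := by
      rw [hyx, inner_smul_right]
      simp [EuclideanSpace.inner_single_right, mul_comm]
    have hnorm : ‖y - x‖^2 = a^2 := by
      rw [hyx]
      simp [norm_smul, EuclideanSpace.norm_single, mul_pow, sq_abs]
    rw [hinner, hnorm] at hineq
    have hly : l y - l x ≥ (g x j)^2 / (2*M) := by
      have : a * g x j - M/2 * a^2 = (g x j)^2 / (2*M) := by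
        field_simp [ha]
        have haM : a * M = g x j := by rw [ha]; exact div_mul_cancel₀ _ (ne_of_gt hM)
        linear_combination (g x j - a * M) * haM
      nlinarith [hineq]
    have hmax : l y ≤ l (B (L ∪ {j})) := hBmax _ _ hysupp
    have : fsel l B (L ∪ {j}) - fsel l B L = l (B (L ∪ {j})) - l x := by
      simp [fsel, hx]
    rw [this]
    linarith
  -- upper bound on the total gain
  have key2 : fsel l B (L ∪ S) - fsel l B L ≤ ∑ j ∈ S, (g x j)^2 / (2*m) := by
    set y : Euc n := B (L ∪ S) with hy
    have hysupp : SuppIn (L ∪ S) y := hBsupp _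
    have hcardLS : (L ∪ S).card ≤ U.card + k := by
      calc (L ∪ S).card ≤ L.card + S.card := Finset.card_union_le _ _
        _ ≤ U.card + k := add_le_add (Finset.card_le_card hLU) hS
    have hycard : norm0 y ≤ U.card + k := le_trans (norm0_le_of_suppIn hysupp) hcardLS
    have hdsupp : SuppIn (L ∪ S) (x - y) := by
      intro i hi
      simp [PiLp.sub_apply, hxsupp i (fun h => hi (Finset.mem_union_left _ h)), hysupp i hi]
    have hdcard : norm0 (x - y) ≤ U.card + k := le_trans (norm0_le_of_suppIn hdsupp) hcardLS
    have hineq := (hl x y hxcard hycard hdcard).1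
    have hinner : (inner ℝ (g x) (y - x) : ℝ) = ∑ i, g x i * (y - x) i := by
      simp [PiLp.inner_apply, RCLike.inner_apply, mul_comm]
    have hnorm : ‖y - x‖^2 = ∑ i, ((y - x) i)^2 := by
      rw [EuclideanSpace.norm_eq, Real.sq_sqrt (by positivity)]
      simp [Real.norm_eq_abs, sq_abs]
    rw [hinner, hnorm] at hineq
    have hterm : ∀ i : Fin n, g x i * (y - x) i - m/2 * ((y - x) i)^2 ≤
        if i ∈ S then (g x i)^2 / (2*m) else 0 := by
      intro i
      by_cases hiS : i ∈ S
      · simp only [hiS, if_true]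
        rw [le_div_iff₀ (by linarith : (0:ℝ) < 2*m)]
        nlinarith [sq_nonneg (m * (y - x) i - g x i)]
      · simp only [hiS, if_false]
        by_cases hiL : i ∈ L
        · have := hstat i hiL
          rw [this]
          nlinarith [sq_nonneg ((y - x) i)]
        · have hiLS : i ∉ L ∪ S := by simp [hiL, hiS]
          have : (y - x) i = 0 := by
            simp [PiLp.sub_apply, hysupp i hiLS, hxsupp i hiL]
          simp [this]
    have hsum : ∑ i, (g x i * (y - x) i - m/2 * ((y - x) i)^2) ≤
        ∑ i, (if i ∈ S then (g x i)^2 / (2*m) else 0) := Finset.sum_le_sum fun i _ => hterm i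
    have hsum2 : ∑ i : Fin n, (if i ∈ S then (g x i)^2 / (2*m) else 0) =
        ∑ j ∈ S, (g x j)^2 / (2*m) := by
      rw [Finset.sum_ite_mem]
      congr 1
      simp [Finset.inter_comm]
    have hfs : fsel l B (L ∪ S) - fsel l B L = l y - l x := by simp [fsel, hy, hx]
    rw [hfs]
    have hexp : ∑ i, (g x i * (y - x) i - m/2 * ((y - x) i)^2) =
        (∑ i, g x i * (y - x) i) - m/2 * ∑ i, ((y - x) i)^2 := by
      rw [Finset.sum_sub_distrib, Finset.mul_sum]
    rw [hexp, hsum2] at hsum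
    linarith
  -- combine
  have hMm : ∀ j : Fin n, (g x j)^2 / (2*M) = (m/M) * ((g x j)^2 / (2*m)) := by
    intro j
    field_simp
  have h1 : ∑ j ∈ S, (g x j)^2 / (2*M) ≤ ∑ j ∈ S, (fsel l B (L ∪ {j}) - fsel l B L) :=
    Finset.sum_le_sum key1
  have h2 : ∑ j ∈ S, (g x j)^2 / (2*M) = (m/M) * ∑ j ∈ S, (g x j)^2 / (2*m) := by
    rw [Finset.mul_sum]; exact Finset.sum_congr rfl fun j _ => hMm j
  have h3 : (m/M) * (fsel l B (L ∪ S) - fsel l B L) ≤ (m/M) * ∑ j ∈ S, (g x j)^2 / (2*m) :=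
    mul_le_mul_of_nonneg_left key2 (le_of_lt (div_pos hm hM))
  linarith
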